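/- Let φ : 𝔻 \ N → 𝔻 \ N' be a surjective holomorphic map between complements of Lebesgue-null closed sets, such that the algebraic degree function deg φ (counting preimages) takes values in ℕ* and the total area identity ∫ deg φ · ω = ∫ ω holds for the standard area form ω on 𝔻. Then deg φ ≡ 1 and φ is injective. -/

import Mathlib

/-!
**Statement 12.** Let φ : 𝔻 \ N → 𝔻 \ N' be a surjective holomorphic map between
complements of (closed, Lebesgue-null) sets, whose degree function deg φ (counting
preimages) takes values in ℕ* and satisfies the total area identity
∫ deg φ · ω = ∫ ω for the standard area form on 𝔻.  Then deg φ ≡ 1 and φ is injective.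
-/

open Metric MeasureTheory Topology Filter

theorem degree_one_and_injective
    (N N' : Set ℂ)
    (hNcl : IsClosed N) (hN'cl : IsClosed N')
    (hNnull : volume N = 0) (hN'null : volume N' = 0)
    (φ : ℂ → ℂ) (d : ℂ → ℤ)
    (hol : DifferentiableOn ℂ φ (ball (0:ℂ) 1 \ N))
    (maps : Set.MapsTo φ (ball (0:ℂ) 1 \ N) (ball (0:ℂ) 1 \ N'))
    (surj : Set.SurjOn φ (ball (0:ℂ) 1 \ N) (ball (0:ℂ) 1 \ N'))
    -- d counts preimages, fibers are finite …
    (hfib : ∀ w ∈ ball (0:ℂ) 1 \ N', {z ∈ ball (0:ℂ) 1 \ N | φ z = w}.Finite)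
    (hdeg : ∀ w ∈ ball (0:ℂ) 1 \ N',
      d w = Set.ncard {z ∈ ball (0:ℂ) 1 \ N | φ z = w})
    -- … and takes values in ℕ*
    (hpos : ∀ w ∈ ball (0:ℂ) 1 \ N', 1 ≤ d w)
    -- total area identity ∫ deg φ · ω = ∫ ω
    (harea : (∫ w in ball (0:ℂ) 1 \ N', (d w : ℝ)) = ∫ w in ball (0:ℂ) 1 \ N', (1:ℝ)) :
    (∀ w ∈ ball (0:ℂ) 1 \ N', d w = 1) ∧ Set.InjOn φ (ball (0:ℂ) 1 \ N) := by
  set S : Set ℂ := ball (0:ℂ) 1 \ N with hSdef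
  set S' : Set ℂ := ball (0:ℂ) 1 \ N' with hS'def
  have hSopen : IsOpen S := isOpen_ball.sdiff hNcl
  have hS'open : IsOpen S' := isOpen_ball.sdiff hN'cl
  have hS'meas : MeasurableSet S' := hS'open.measurableSet
  have hvol : volume S' = volume (ball (0:ℂ) 1) := measure_diff_null hN'null
  have hvolpos : 0 < volume S' := hvol ▸ measure_ball_pos _ _ one_pos
  have hvollt : volume S' < ⊤ := hvol ▸ measure_ball_lt_top
  -- the constant 1 integrates to a positive number
  have hI1 : (∫ _ in S', (1:ℝ)) = (volume S').toReal := by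
    simp [setIntegral_const, Measure.real]
  have hI1pos : 0 < (∫ _ in S', (1:ℝ)) := by
    rw [hI1]
    exact ENNReal.toReal_pos hvolpos.ne' hvollt.ne
  have hint1 : IntegrableOn (fun _ : ℂ => (1:ℝ)) S' := by
    exact integrableOn_const hvollt.ne
  -- d is integrable on S'
  have hintd : IntegrableOn (fun w => (d w : ℝ)) S' := by
    by_contra h
    rw [integral_undef h] at harea
    exact hI1pos.ne' harea.symm
  -- d = 1 a.e. on S'
  have hae : ∀ᵐ w ∂(volume.restrict S'), (d w : ℝ) - 1 = 0 := by
    have hintf : Integrable (fun w => (d w : ℝ) - 1) (volume.restrict S') :=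
      hintd.sub hint1
    have hIf : (∫ w in S', ((d w : ℝ) - 1)) = 0 := by
      rw [integral_sub hintd hint1, harea, sub_self]
    have hnn : 0 ≤ᵐ[volume.restrict S'] fun w => (d w : ℝ) - 1 := by
      refine (ae_restrict_iff' hS'meas).2 (Filter.Eventually.of_forall fun w hw => ?_)
      have := hpos w hw
      simp only [Pi.zero_apply]
      have : (1:ℝ) ≤ (d w : ℝ) := by exact_mod_cast this
      linarith
    have := (integral_eq_zero_iff_of_nonneg_ae hnn hintf).1 hIf
    filter_upwards [this] with w hw using hw
  -- the set where d ≠ 1 inside S' is null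
  have hnull : volume ({w | d w ≠ 1} ∩ S') = 0 := by
    rw [← Measure.restrict_apply' hS'meas]
    have h0 := ae_iff.1 hae
    refine measure_mono_null ?_ h0
    intro w hw
    simp only [Set.mem_setOf_eq] at hw ⊢
    intro hc
    apply hw
    have : (d w : ℝ) = 1 := by linarith
    exact_mod_cast this
  -- open mapping principle at preimage points
  have key : ∀ w ∈ S', ∀ z ∈ S, φ z = w → 𝓝 w ≤ Filter.map φ (𝓝 z) := by
    intro w hw z hz hφ
    have ha : AnalyticAt ℂ φ z := hol.analyticAt (hSopen.mem_nhds hz)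
    rcases ha.eventually_constant_or_nhds_le_map_nhds with hc | hle
    · exfalso
      have hmem : {z' | z' ∈ S ∧ φ z' = w} ∈ 𝓝 z := by
        have h1 : {z' | φ z' = w} ∈ 𝓝 z := by
          filter_upwards [hc] with z' hz' using hz'.trans hφ
        have h2 : S ∈ 𝓝 z := hSopen.mem_nhds hz
        filter_upwards [h1, h2] with z' h1 h2 using ⟨h2, h1⟩
      exact (infinite_of_mem_nhds z hmem) (hfib w hw)
    · rwa [hφ] at hle
  -- no point of S' has two distinct preimages
  have hnot2 : ∀ w ∈ S', ∀ z₁ ∈ S, ∀ z₂ ∈ S, φ z₁ = w → φ z₂ = w → z₁ = z₂ := by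
    intro w hw z₁ hz₁ z₂ hz₂ h₁ h₂
    by_contra hne
    obtain ⟨r₁, hr₁, hB₁⟩ := Metric.isOpen_iff.1 hSopen z₁ hz₁
    obtain ⟨r₂, hr₂, hB₂⟩ := Metric.isOpen_iff.1 hSopen z₂ hz₂
    set r : ℝ := min (dist z₁ z₂ / 2) (min r₁ r₂) with hrdef
    have hr : 0 < r := by
      have h : 0 < dist z₁ z₂ := dist_pos.2 hne
      simp only [hrdef, lt_min_iff]
      exact ⟨by positivity, hr₁, hr₂⟩
    have hdisj : Disjoint (ball z₁ r) (ball z₂ r) := by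
      apply ball_disjoint_ball
      have h1 : r ≤ dist z₁ z₂ / 2 := min_le_left _ _
      linarith
    have hB₁' : ball z₁ r ⊆ S :=
      (ball_subset_ball ((min_le_right _ _).trans (min_le_left _ _))).trans hB₁
    have hB₂' : ball z₂ r ⊆ S :=
      (ball_subset_ball ((min_le_right _ _).trans (min_le_right _ _))).trans hB₂
    have hW : φ '' ball z₁ r ∩ (φ '' ball z₂ r ∩ S') ∈ 𝓝 w := by
      refine Filter.inter_mem ?_ (Filter.inter_mem ?_ (hS'open.mem_nhds hw))
      · exact key w hw z₁ hz₁ h₁ (Filter.image_mem_map (ball_mem_nhds _ hr))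
      · exact key w hw z₂ hz₂ h₂ (Filter.image_mem_map (ball_mem_nhds _ hr))
    have hpos' : 0 < volume (φ '' ball z₁ r ∩ (φ '' ball z₂ r ∩ S')) :=
      Measure.measure_pos_of_mem_nhds _ hW
    have hsub : φ '' ball z₁ r ∩ (φ '' ball z₂ r ∩ S') ⊆ {w | d w ≠ 1} ∩ S' := by
      rintro w' ⟨⟨x₁, hx₁, hφ₁⟩, ⟨x₂, hx₂, hφ₂⟩, hw'⟩
      refine ⟨?_, hw'⟩
      have hxne : x₁ ≠ x₂ := fun h => hdisj.ne_of_mem hx₁ hx₂ h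
      have hcard : 1 < Set.ncard {z ∈ S | φ z = w'} := by
        rw [Set.one_lt_ncard_iff (hfib w' hw')]
        exact ⟨x₁, x₂, ⟨hB₁' hx₁, hφ₁⟩, ⟨hB₂' hx₂, hφ₂⟩, hxne⟩
      have := hdeg w' hw'
      simp only [Set.mem_setOf_eq]
      omega
    exact absurd (le_antisymm (hnull ▸ measure_mono hsub) zero_le) hpos'.ne'
  constructor
  · intro w hw
    obtain ⟨z₀, hz₀, hφz₀⟩ := surj hw
    have hfeq : {z ∈ S | φ z = w} = {z₀} := by
      ext x
      simp only [Set.mem_setOf_eq, Set.mem_singleton_iff]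
      constructor
      · rintro ⟨hx, hφx⟩
        exact hnot2 w hw x hx z₀ hz₀ hφx hφz₀
      · rintro rfl
        exact ⟨hz₀, hφz₀⟩
    rw [hdeg w hw, hfeq, Set.ncard_singleton]
    norm_num
  · intro a ha b hb hab
    have hwa : φ a ∈ S' := maps ha
    exact hnot2 (φ a) hwa a ha b hb rfl hab.symm
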